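/- arXiv:1807.04214 — 2 statements merged into one kernel-verified Lean document; each statement's English description precedes it below -/
import Mathlib

section
/- Let $L \ge 0$, let $P$ be a real $(L+1) \times (L+1)$ matrix indexed by $\{0,\dots,L\}$ with nonnegative entries and lower triangular ($P_{xy} = 0$ for $y > x$), and let $\pi^0_0, \dots, \pi^0_L \ge 0$. Assume that for all $0 \le j < i \le L$ we have $P_{jj} > 0$ and $P_{ii} \neq P_{jj}$. Then for every $\Delta \ge 1$: $\sum_{i=0}^{L} \sum_{j=0}^{i} j \, (P^{\Delta})_{ij} \, \pi^0_i \;\ge\; \sum_{j=0}^{L} j \, \pi^0_j \, P_{jj}^{\Delta} \;+\; \sum_{i=0}^{L} \sum_{j=0}^{i-1} j \, \pi^0_i \, P_{ij} \, P_{jj}^{\Delta - 1} \, \frac{1 - (P_{ii}/P_{jj})^{\Delta}}{1 - P_{ii}/P_{jj}}$. -/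
/-- Lower bound on the cloud manager's expected revenue: for a
nonnegative lower triangular `(L+1) × (L+1)` matrix `P`, nonnegative entering
probabilities `π⁰`, with `P_{jj} > 0` and `P_{ii} ≠ P_{jj}` for all `j < i`, and
every `Δ ≥ 1`:
`∑_i ∑_{j ≤ i} j (P^Δ)_{ij} π⁰_i ≥ ∑_j j π⁰_j P_{jj}^Δ
  + ∑_i ∑_{j < i} j π⁰_i P_{ij} P_{jj}^{Δ-1} (1 - (P_{ii}/P_{jj})^Δ)/(1 - P_{ii}/P_{jj})`. -/
theorem stmt_9 (L : ℕ) (P : Matrix (Fin (L + 1)) (Fin (L + 1)) ℝ)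
    (hpos : ∀ x y : Fin (L + 1), 0 ≤ P x y)
    (hlt : ∀ x y : Fin (L + 1), x < y → P x y = 0)
    (π0 : Fin (L + 1) → ℝ) (hπ : ∀ i, 0 ≤ π0 i)
    (hdiag : ∀ i j : Fin (L + 1), j < i → 0 < P j j ∧ P i i ≠ P j j)
    (Δ : ℕ) (hΔ : 1 ≤ Δ) :
    ∑ i : Fin (L + 1), ∑ j ∈ Finset.Iic i, ((j : ℕ) : ℝ) * (P ^ Δ) i j * π0 i ≥
      (∑ j : Fin (L + 1), ((j : ℕ) : ℝ) * π0 j * P j j ^ Δ) +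
        ∑ i : Fin (L + 1), ∑ j ∈ Finset.Iio i,
          ((j : ℕ) : ℝ) * π0 i * P i j * P j j ^ (Δ - 1) *
            ((1 - (P i i / P j j) ^ Δ) / (1 - P i i / P j j)) := by
  -- entries of powers are nonnegative
  have hnn : ∀ n, ∀ x y : Fin (L + 1), 0 ≤ (P ^ n) x y := by
    intro n
    induction n with
    | zero =>
      intro x y
      by_cases h : x = y <;> simp [Matrix.one_apply, h]
    | succ n ih =>
      intro x y
      rw [pow_succ, Matrix.mul_apply]
      exact Finset.sum_nonneg fun k _ => mul_nonneg (ih x k) (hpos k y)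
  -- powers are lower triangular
  have htri : ∀ n, ∀ x y : Fin (L + 1), x < y → (P ^ n) x y = 0 := by
    intro n
    induction n with
    | zero =>
      intro x y hxy
      simp [Matrix.one_apply, hxy.ne]
    | succ n ih =>
      intro x y hxy
      rw [pow_succ, Matrix.mul_apply]
      apply Finset.sum_eq_zero
      intro k _
      rcases lt_or_ge x k with h | h
      · rw [ih x k h, zero_mul]
      · rw [hlt k y (h.trans_lt hxy), mul_zero]
  -- diagonal of powers
  have hdp : ∀ n, ∀ i : Fin (L + 1), (P ^ n) i i = P i i ^ n := by
    intro n
    induction n with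
    | zero => intro i; simp
    | succ n ih =>
      intro i
      rw [pow_succ, Matrix.mul_apply, Finset.sum_eq_single i]
      · rw [ih, pow_succ]
      · intro k _ hk
        rcases lt_or_gt_of_ne hk with h | h
        · rw [hlt k i h, mul_zero]
        · rw [htri n i k h, zero_mul]
      · simp
  -- off-diagonal lower bound
  have hoff : ∀ n, ∀ i j : Fin (L + 1), j < i →
      P i j * ∑ k ∈ Finset.range n, P i i ^ k * P j j ^ (n - 1 - k) ≤ (P ^ n) i j := by
    intro n
    induction n with
    | zero => intro i j hij; simpa using hnn 0 i j
    | succ n ih =>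
      intro i j hij
      have hsum : ∑ k ∈ Finset.range (n + 1), P i i ^ k * P j j ^ (n + 1 - 1 - k)
          = P i i * (∑ k ∈ Finset.range n, P i i ^ k * P j j ^ (n - 1 - k)) + P j j ^ n := by
        rw [Finset.sum_range_succ', Finset.mul_sum]
        simp only [pow_zero, one_mul, Nat.add_sub_cancel, Nat.sub_zero]
        congr 1
        apply Finset.sum_congr rfl
        intro k hk
        rw [show n - (k + 1) = n - 1 - k by omega, pow_succ]
        ring
      have h1 : P i i * (P ^ n) i j + P i j * (P ^ n) j j ≤ (P ^ (n + 1)) i j := by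
        rw [pow_succ', Matrix.mul_apply]
        calc P i i * (P ^ n) i j + P i j * (P ^ n) j j
            = ∑ k ∈ ({i, j} : Finset (Fin (L + 1))), P i k * (P ^ n) k j := by
              rw [Finset.sum_pair hij.ne']
          _ ≤ ∑ k, P i k * (P ^ n) k j :=
              Finset.sum_le_sum_of_subset_of_nonneg (Finset.subset_univ _)
                (fun k _ _ => mul_nonneg (hpos i k) (hnn n k j))
      calc P i j * ∑ k ∈ Finset.range (n + 1), P i i ^ k * P j j ^ (n + 1 - 1 - k)
          = P i i * (P i j * ∑ k ∈ Finset.range n, P i i ^ k * P j j ^ (n - 1 - k))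
              + P i j * P j j ^ n := by rw [hsum]; ring
        _ ≤ P i i * (P ^ n) i j + P i j * (P ^ n) j j := by
            apply add_le_add
            · exact mul_le_mul_of_nonneg_left (ih i j hij) (hpos i i)
            · rw [hdp n j]
        _ ≤ (P ^ (n + 1)) i j := h1
  -- geometric sum identity
  have hgeom : ∀ i j : Fin (L + 1), j < i →
      P j j ^ (Δ - 1) * ((1 - (P i i / P j j) ^ Δ) / (1 - P i i / P j j))
        = ∑ k ∈ Finset.range Δ, P i i ^ k * P j j ^ (Δ - 1 - k) := by
    intro i j hij
    obtain ⟨hb, hne⟩ := hdiag i j hij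
    have hbne : P j j ≠ 0 := hb.ne'
    have hr : P i i / P j j ≠ 1 := by
      intro h
      apply hne
      field_simp at h
      exact h
    have hgs : (1 - (P i i / P j j) ^ Δ) / (1 - P i i / P j j)
        = ∑ k ∈ Finset.range Δ, (P i i / P j j) ^ k := by
      rw [show (1 - (P i i / P j j) ^ Δ) = -((P i i / P j j) ^ Δ - 1) by ring,
        show (1 - P i i / P j j) = -(P i i / P j j - 1) by ring, neg_div_neg_eq,
        ← geom_sum_eq hr]
    rw [hgs, Finset.mul_sum]
    apply Finset.sum_congr rfl
    intro k hk
    have hk' : k ≤ Δ - 1 := by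
      simp only [Finset.mem_range] at hk; omega
    have hp : P j j ^ (Δ - 1) = P j j ^ k * P j j ^ (Δ - 1 - k) := by
      rw [← pow_add]; congr 1; omega
    rw [hp, div_pow]
    field_simp
  -- split the inner sum
  have hsplit : ∀ i : Fin (L + 1),
      ∑ j ∈ Finset.Iic i, ((j : ℕ) : ℝ) * (P ^ Δ) i j * π0 i
        = ((i : ℕ) : ℝ) * (P ^ Δ) i i * π0 i
          + ∑ j ∈ Finset.Iio i, ((j : ℕ) : ℝ) * (P ^ Δ) i j * π0 i := by
    intro i
    rw [← Finset.Iio_insert, Finset.sum_insert (by simp)]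
  calc ∑ i : Fin (L + 1), ∑ j ∈ Finset.Iic i, ((j : ℕ) : ℝ) * (P ^ Δ) i j * π0 i
      = (∑ i : Fin (L + 1), ((i : ℕ) : ℝ) * (P ^ Δ) i i * π0 i)
        + ∑ i : Fin (L + 1), ∑ j ∈ Finset.Iio i, ((j : ℕ) : ℝ) * (P ^ Δ) i j * π0 i := by
        rw [← Finset.sum_add_distrib]
        exact Finset.sum_congr rfl fun i _ => hsplit i
    _ ≥ (∑ j : Fin (L + 1), ((j : ℕ) : ℝ) * π0 j * P j j ^ Δ) +
        ∑ i : Fin (L + 1), ∑ j ∈ Finset.Iio i,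
          ((j : ℕ) : ℝ) * π0 i * P i j * P j j ^ (Δ - 1) *
            ((1 - (P i i / P j j) ^ Δ) / (1 - P i i / P j j)) := by
        apply add_le_add
        · apply le_of_eq
          apply Finset.sum_congr rfl
          intro i _
          rw [hdp Δ i]; ring
        · apply Finset.sum_le_sum
          intro i _
          apply Finset.sum_le_sum
          intro j hj
          have hij : j < i := Finset.mem_Iio.mp hj
          calc ((j : ℕ) : ℝ) * π0 i * P i j * P j j ^ (Δ - 1) *
                ((1 - (P i i / P j j) ^ Δ) / (1 - P i i / P j j))
              = ((j : ℕ) : ℝ) * π0 i *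
                  (P i j * ∑ k ∈ Finset.range Δ, P i i ^ k * P j j ^ (Δ - 1 - k)) := by
                rw [← hgeom i j hij]; ring
            _ ≤ ((j : ℕ) : ℝ) * π0 i * (P ^ Δ) i j := by
                exact mul_le_mul_of_nonneg_left (hoff Δ i j hij)
                  (mul_nonneg (Nat.cast_nonneg _) (hπ i))
            _ = ((j : ℕ) : ℝ) * (P ^ Δ) i j * π0 i := by ring
end

section
/- Let $u \in \mathbb{R}$, $\gamma, \mu, \lambda_A, \lambda_{CCN}, \lambda_{CP} > 0$, $T > 0$, let $F : \mathbb{R} \to \mathbb{R}$ be differentiable, $G : \mathbb{R} \to \mathbb{R}$ arbitrary, and let $D : \mathbb{R} \to \mathbb{R}$ be differentiable. Define $b(r) = e^{-\gamma r} u - D(r)$. Suppose that for all $r \in [0, T]$, $D$ satisfies the second-price Hamilton–Jacobi–Bellman equation $\gamma D(r) = -D'(r) + \mu \lambda_A \Big( e^{\lambda_{CCN}(F(b(r)) - 1)} (1 - e^{\lambda_{CP}(G(b(r)) - 1)}) (e^{-\gamma r} u - D(r)) - (1 - e^{\lambda_{CP}(G(b(r)) - 1)}) \big[ e^{-\lambda_{CCN}}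 b(T) + \int_{b(T)}^{b(r)} \lambda_{CCN} \, e^{\lambda_{CCN}(F(s) - 1)} \, s \, F'(s) \, ds \big] \Big)$. Then for all $r \in [0, T]$, the bid function $b$ is differentiable and satisfies the integro-differential equation $b(r)\big[ -\gamma - \mu \lambda_A \, e^{\lambda_{CCN}(F(b(r)) - 1)} (1 - e^{\lambda_{CP}(G(b(r)) - 1)}) \big] - b'(r) + \mu \lambda_A \lambda_{CCN} (1 - e^{\lambda_{CP}(G(b(r)) - 1)}) \int_{b(T)}^{b(r)} e^{\lambda_{CCN}(F(s) - 1)} \, s \, F'(s) \, ds + \mu \lambda_A (1 - e^{\lambda_{CP}(G(b(r)) - 1)}) \, e^{-\lambda_{CCN}} b(T) = 0$. -/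
/-- In the second-price auction-based market, if the discounted
expected utility `D` satisfies the second-price HJB equation on `[0, T]`, then the bid
function `b(r) = e^{-γ r} u - D(r)` is differentiable and satisfies on `[0, T]` the
integro-differential equation
`b(r)[-γ - μ λ_A e^{λ_CCN (F(b(r))-1)} (1 - e^{λ_CP (G(b(r))-1)})] - b'(r)
  + μ λ_A λ_CCN (1 - e^{λ_CP (G(b(r))-1)}) ∫_{b(T)}^{b(r)} e^{λ_CCN (F(s)-1)} s F'(s) ds
  + μ λ_A (1 - e^{λ_CP (G(b(r))-1)}) e^{-λ_CCN} b(T) = 0`. -/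
theorem stmt_12 (u : ℝ) (γ μ lamA lamCCN lamCP T : ℝ)
    (hγ : 0 < γ) (hμ : 0 < μ) (hA : 0 < lamA) (hCCN : 0 < lamCCN) (hCP : 0 < lamCP)
    (hT : 0 < T)
    (F : ℝ → ℝ) (hF : Differentiable ℝ F) (G : ℝ → ℝ)
    (D : ℝ → ℝ) (hD : Differentiable ℝ D)
    (b : ℝ → ℝ) (hb : ∀ r, b r = Real.exp (-γ * r) * u - D r)
    (hHJB : ∀ r ∈ Set.Icc (0 : ℝ) T,
      γ * D r =
        -(deriv D r) +
          μ * lamA *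
            (Real.exp (lamCCN * (F (b r) - 1)) *
                (1 - Real.exp (lamCP * (G (b r) - 1))) *
                (Real.exp (-γ * r) * u - D r) -
              (1 - Real.exp (lamCP * (G (b r) - 1))) *
                (Real.exp (-lamCCN) * b T +
                  ∫ s in (b T)..(b r),
                    lamCCN * Real.exp (lamCCN * (F s - 1)) * s * deriv F s))) :
    Differentiable ℝ b ∧
    ∀ r ∈ Set.Icc (0 : ℝ) T,
      b r *
          (-γ -
            μ * lamA * Real.exp (lamCCN * (F (b r) - 1)) *
              (1 - Real.exp (lamCP * (G (b r) - 1)))) -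
        deriv b r +
        μ * lamA * lamCCN * (1 - Real.exp (lamCP * (G (b r) - 1))) *
          (∫ s in (b T)..(b r), Real.exp (lamCCN * (F s - 1)) * s * deriv F s) +
        μ * lamA * (1 - Real.exp (lamCP * (G (b r) - 1))) * Real.exp (-lamCCN) * b T =
      0 := by

  have hbe : b = fun r => Real.exp (-γ * r) * u - D r := funext hb
  have hder : ∀ r : ℝ, HasDerivAt b (-γ * Real.exp (-γ * r) * u - deriv D r) r := by
    intro r
    rw [hbe]
    have h1 : HasDerivAt (fun x : ℝ => Real.exp (-γ * x) * u)
        (-γ * Real.exp (-γ * r) * u) r := by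
      have : HasDerivAt (fun x : ℝ => Real.exp (-γ * x)) (Real.exp (-γ * r) * (-γ)) r := by
        simpa [mul_comm] using (((hasDerivAt_id r).const_mul (-γ)).exp)
      simpa [mul_comm, mul_assoc, mul_left_comm] using this.mul_const u
    exact h1.sub (hD r).hasDerivAt
  refine ⟨fun r => (hder r).differentiableAt, fun r hr => ?_⟩
  have hd : deriv b r = -γ * Real.exp (-γ * r) * u - deriv D r := (hder r).deriv
  have hHJB' := hHJB r hr
  have hI : (∫ s in (b T)..(b r), lamCCN * Real.exp (lamCCN * (F s - 1)) * s * deriv F s)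
      = lamCCN * ∫ s in (b T)..(b r), Real.exp (lamCCN * (F s - 1)) * s * deriv F s := by
    rw [← intervalIntegral.integral_const_mul]
    simp [mul_assoc]
  rw [hI] at hHJB'
  have hbr := hb r
  have hbt := hb T
  linear_combination (-γ - μ * lamA * Real.exp (lamCCN * (F (b r) - 1)) *
      (1 - Real.exp (lamCP * (G (b r) - 1)))) * hbr - hd + hHJB'
end
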